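/- Gumbel-softmax convergence: let y_T(i) = exp((f_i(s)+ε_i)/T) / Σ_j exp((f_j(s)+ε_j)/T) with ε₁,...,ε_k i.i.d. standard Gumbel. As T → 0, the random vector y_T converges in distribution to the one-hot vector y with P(y(i)=1) = exp(f_i(s)) / Σ_j exp(f_j(s)). -/

import Mathlib

open MeasureTheory Filter Topology ProbabilityTheory Set

namespace GumbelAux

/-- quantile function of the Gumbel distribution with location `a`. -/
noncomputable def gq (a u : ℝ) : ℝ := a - Real.log (-Real.log u)

/-- the Gumbel measure with location `a`, as pushforward of uniform on `(0,1)`. -/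
noncomputable def gm (a : ℝ) : Measure ℝ := (volume.restrict (Set.Ioo 0 1)).map (gq a)

lemma gq_measurable (a : ℝ) : Measurable (gq a) :=
  measurable_const.sub (Real.measurable_log.comp Real.measurable_log.neg)

lemma gq_le_iff {a x u : ℝ} (hu : u ∈ Set.Ioo (0:ℝ) 1) :
    gq a u ≤ x ↔ u ≤ Real.exp (-Real.exp (-(x - a))) := by
  have h1 : 0 < -Real.log u := by
    have := Real.log_neg hu.1 hu.2; linarith
  rw [gq, sub_le_comm, Real.le_log_iff_exp_le h1, le_neg,
    ← Real.log_le_iff_le_exp hu.1]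
  constructor <;> intro h <;> [skip; skip] <;>
    · have : -(x - a) = a - x := by ring
      simp_all [this]

lemma gm_Iic (a x : ℝ) :
    gm a (Set.Iic x) = ENNReal.ofReal (Real.exp (-Real.exp (-(x - a)))) := by
  rw [gm, Measure.map_apply (gq_measurable a) measurableSet_Iic,
      Measure.restrict_apply (gq_measurable a measurableSet_Iic)]
  set c := Real.exp (-Real.exp (-(x - a))) with hc
  have hc0 : 0 < c := Real.exp_pos _
  have hc1 : c < 1 := by
    have h : 0 < Real.exp (-(x - a)) := Real.exp_pos _
    calc c < Real.exp 0 := Real.exp_lt_exp.2 (by linarith)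
    _ = 1 := Real.exp_zero
  have hset : gq a ⁻¹' Set.Iic x ∩ Set.Ioo 0 1 = Set.Ioc 0 c := by
    ext u
    simp only [Set.mem_inter_iff, Set.mem_preimage, Set.mem_Iic, Set.mem_Ioo, Set.mem_Ioc]
    constructor
    · rintro ⟨h1, h2⟩; exact ⟨h2.1, (gq_le_iff ⟨h2.1, h2.2⟩).1 h1⟩
    · rintro ⟨h1, h2⟩
      have hlt : u < 1 := lt_of_le_of_lt h2 hc1
      exact ⟨(gq_le_iff ⟨h1, hlt⟩).2 h2, h1, hlt⟩
  rw [hset, Real.volume_Ioc, sub_zero]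

instance gm_prob (a : ℝ) : IsProbabilityMeasure (gm a) := by
  constructor
  rw [gm, Measure.map_apply (gq_measurable a) MeasurableSet.univ, Set.preimage_univ,
    Measure.restrict_apply_univ, Real.volume_Ioo]
  norm_num

lemma gm_singleton (a x : ℝ) : gm a {x} = 0 := by
  rw [gm, Measure.map_apply (gq_measurable a) (measurableSet_singleton x),
      Measure.restrict_apply (gq_measurable a (measurableSet_singleton x))]
  have hmono : StrictMonoOn (gq a) (Set.Ioo 0 1) := by
    intro u hu v hv huv
    have hv1 : 0 < -Real.log v := by have := Real.log_neg hv.1 hv.2; linarith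
    have h2 : -Real.log v < -Real.log u := by
      have := Real.log_lt_log hu.1 huv; linarith
    have := Real.log_lt_log hv1 h2
    unfold gq
    linarith
  have hsub : (gq a ⁻¹' {x} ∩ Set.Ioo 0 1).Subsingleton := by
    intro u hu v hv
    exact hmono.injOn hu.2 hv.2 (by
      have h1 : gq a u = x := hu.1
      have h2 : gq a v = x := hv.1
      rw [h1, h2])
  exact hsub.measure_zero _

lemma gm_Iio (a x : ℝ) :
    gm a (Set.Iio x) = ENNReal.ofReal (Real.exp (-Real.exp (-(x - a)))) := by
  have h : Set.Iic x = Set.Iio x ∪ {x} := by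
    rw [Set.Iio_union_right]
  have := gm_Iic a x
  rw [h, measure_union (Set.disjoint_singleton_right.2 (by simp)) (measurableSet_singleton x),
    gm_singleton, add_zero] at this
  exact this

lemma gm_lintegral_exp (a : ℝ) {c : ℝ} (hc : 0 ≤ c) :
    ∫⁻ x, ENNReal.ofReal (Real.exp (-(c * Real.exp (-x)))) ∂(gm a) =
      ENNReal.ofReal (Real.exp a / (Real.exp a + c)) := by
  rw [gm, lintegral_map (by fun_prop) (gq_measurable a)]
  set p := c * Real.exp (-a) with hp
  have hp0 : 0 ≤ p := mul_nonneg hc (Real.exp_pos _).le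
  have hcongr : ∀ u ∈ Set.Ioo (0:ℝ) 1,
      ENNReal.ofReal (Real.exp (-(c * Real.exp (-(gq a u))))) = ENNReal.ofReal (u ^ p) := by
    intro u hu
    have hl : 0 < -Real.log u := by have := Real.log_neg hu.1 hu.2; linarith
    have h1 : Real.exp (-(gq a u)) = Real.exp (-a) * (-Real.log u) := by
      rw [gq, neg_sub, Real.exp_sub, Real.exp_log hl]
      rw [div_eq_mul_inv, ← Real.exp_neg]
      ring
    rw [h1, Real.rpow_def_of_pos hu.1]
    congr 1
    rw [hp]; ring
  rw [setLIntegral_congr_fun measurableSet_Ioo hcongr]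
  have hint : IntegrableOn (fun u : ℝ => u ^ p) (Set.Ioo 0 1) := by
    have := (intervalIntegral.intervalIntegrable_rpow' (a := 0) (b := 1)
      (by linarith : (-1:ℝ) < p))
    rw [intervalIntegrable_iff_integrableOn_Ioc_of_le (by norm_num)] at this
    exact this.mono_set Set.Ioo_subset_Ioc_self
  have hnn : 0 ≤ᵐ[volume.restrict (Set.Ioo (0:ℝ) 1)] fun u : ℝ => u ^ p := by
    filter_upwards [ae_restrict_mem measurableSet_Ioo] with u hu
    exact Real.rpow_nonneg hu.1.le p
  rw [← ofReal_integral_eq_lintegral_ofReal hint hnn]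
  have hval : ∫ u in Set.Ioo (0:ℝ) 1, u ^ p = 1 / (p + 1) := by
    rw [← MeasureTheory.integral_Ioc_eq_integral_Ioo,
      ← intervalIntegral.integral_of_le (by norm_num : (0:ℝ) ≤ 1)]
    rw [integral_rpow (Or.inl (by linarith : (-1:ℝ) < p))]
    rw [Real.one_rpow, Real.zero_rpow (by linarith : p + 1 ≠ 0)]
    norm_num
  rw [hval]
  congr 1
  have hea : Real.exp a ≠ 0 := (Real.exp_pos a).ne'
  have hden : Real.exp a + c > 0 := by positivity
  rw [hp, Real.exp_neg]
  field_simp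
  ring

variable {Ω : Type*} [MeasurableSpace Ω] (P : Measure Ω) [IsProbabilityMeasure P]

lemma map_pi {n : ℕ} (Z : Fin n → Ω → ℝ) (hZ : ∀ i, Measurable (Z i))
    (hind : iIndepFun Z P) :
    P.map (fun ω i => Z i ω) = Measure.pi (fun i => P.map (Z i)) := by
  haveI : ∀ i, IsProbabilityMeasure (P.map (Z i)) :=
    fun i => Measure.isProbabilityMeasure_map (hZ i).aemeasurable
  refine (Measure.pi_eq fun s hs => ?_).symm
  rw [Measure.map_apply (measurable_pi_lambda _ fun i => hZ i) (MeasurableSet.univ_pi hs)]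
  have hpre : (fun ω i => Z i ω) ⁻¹' (Set.pi Set.univ s) = ⋂ i ∈ Finset.univ, Z i ⁻¹' s i := by
    ext ω; simp [Set.mem_pi]
  rw [hpre, hind.measure_inter_preimage_eq_mul Finset.univ (fun i _ => hs i)]
  exact Finset.prod_congr rfl fun i _ => (Measure.map_apply (hZ i) (hs i)).symm


lemma argmax_prob {n : ℕ} (f : Fin (n+1) → ℝ) (Z : Fin (n+1) → Ω → ℝ)
    (hZ : ∀ i, Measurable (Z i))
    (hind : iIndepFun Z P)
    (hlaw : ∀ i, P.map (Z i) = gm (f i)) (i : Fin (n+1)) :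
    P {ω | ∀ j, j ≠ i → Z j ω < Z i ω}
      = ENNReal.ofReal (Real.exp (f i) / ∑ j, Real.exp (f j)) := by
  classical
  set μ : Fin (n+1) → Measure ℝ := fun j => P.map (Z j) with hμ
  haveI : ∀ j, IsProbabilityMeasure (μ j) := fun j => by
    show IsProbabilityMeasure (Measure.map (Z j) P)
    rw [hlaw j]; infer_instance
  have hA : MeasurableSet {v : Fin (n+1) → ℝ | ∀ j, j ≠ i → v j < v i} := by
    have : {v : Fin (n+1) → ℝ | ∀ j, j ≠ i → v j < v i}
        = ⋂ j, ⋂ (_ : j ≠ i), {v | v j < v i} := by ext v; simp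
    rw [this]
    exact MeasurableSet.iInter fun j => MeasurableSet.iInter fun _ =>
      measurableSet_lt (measurable_pi_apply j) (measurable_pi_apply i)
  have hpre : {ω | ∀ j, j ≠ i → Z j ω < Z i ω}
      = (fun ω j => Z j ω) ⁻¹' {v | ∀ j, j ≠ i → v j < v i} := rfl
  rw [hpre, ← Measure.map_apply (measurable_pi_lambda _ fun j => hZ j) hA,
    map_pi P Z hZ hind]
  have hmp := measurePreserving_piFinSuccAbove μ i
  set e := MeasurableEquiv.piFinSuccAbove (fun _ : Fin (n+1) => ℝ) i with he
  have hB : MeasurableSet {p : ℝ × (Fin n → ℝ) | ∀ m, p.2 m < p.1} := by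
    have : {p : ℝ × (Fin n → ℝ) | ∀ m, p.2 m < p.1} = ⋂ m, {p | p.2 m < p.1} := by
      ext p; simp
    rw [this]
    exact MeasurableSet.iInter fun m =>
      measurableSet_lt (by fun_prop) (by fun_prop)
  have hset : {v : Fin (n+1) → ℝ | ∀ j, j ≠ i → v j < v i}
      = e ⁻¹' {p | ∀ m, p.2 m < p.1} := by
    ext v
    simp only [Set.mem_preimage, Set.mem_setOf_eq, he,
      MeasurableEquiv.piFinSuccAbove_apply]
    constructor
    · intro h m; exact h _ (Fin.succAbove_ne i m)
    · intro h j hj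
      obtain ⟨m, rfl⟩ := Fin.exists_succAbove_eq hj
      exact h m
  rw [hset, hmp.measure_preimage hB.nullMeasurableSet, Measure.prod_apply hB]
  set c : ℝ := (∑ j, Real.exp (f j)) - Real.exp (f i) with hcdef
  have hc : 0 ≤ c := by
    have : Real.exp (f i) ≤ ∑ j, Real.exp (f j) :=
      Finset.single_le_sum (fun j _ => (Real.exp_pos (f j)).le) (Finset.mem_univ i)
    linarith
  have inner : ∀ x : ℝ,
      (Measure.pi fun m => μ (i.succAbove m)) (Prod.mk x ⁻¹' {p | ∀ m, p.2 m < p.1})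
        = ENNReal.ofReal (Real.exp (-(c * Real.exp (-x)))) := by
    intro x
    have h1 : Prod.mk x ⁻¹' {p : ℝ × (Fin n → ℝ) | ∀ m, p.2 m < p.1}
        = Set.pi Set.univ (fun _ => Set.Iio x) := by
      ext w; simp [Set.mem_pi]
    rw [h1, Measure.pi_pi]
    have h2 : ∀ m : Fin n, μ (i.succAbove m) (Set.Iio x)
        = ENNReal.ofReal (Real.exp (-(Real.exp (f (i.succAbove m)) * Real.exp (-x)))) := by
      intro m
      show Measure.map (Z (i.succAbove m)) P (Set.Iio x) = _
      rw [hlaw, gm_Iio]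
      congr 3
      rw [neg_sub, Real.exp_sub, div_eq_mul_inv, ← Real.exp_neg]
    simp_rw [h2]
    rw [← ENNReal.ofReal_prod_of_nonneg (fun m _ => (Real.exp_pos _).le)]
    congr 1
    rw [← Real.exp_sum]
    congr 1
    have h4 := Fin.sum_univ_succAbove (fun j => Real.exp (f j) * Real.exp (-x)) i
    have hsm : ∑ j, Real.exp (f j) * Real.exp (-x)
        = (∑ j, Real.exp (f j)) * Real.exp (-x) := by rw [Finset.sum_mul]
    rw [Finset.sum_neg_distrib]
    congr 1
    rw [hcdef, sub_mul]
    linarith [h4, hsm]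
  rw [lintegral_congr inner,
    show μ i = gm (f i) from hlaw i,
    gm_lintegral_exp (f i) hc, hcdef]
  congr 2
  ring

lemma tie_prob {n : ℕ} (f : Fin (n+1) → ℝ) (Z : Fin (n+1) → Ω → ℝ)
    (hZ : ∀ i, Measurable (Z i))
    (hind : iIndepFun Z P)
    (hlaw : ∀ i, P.map (Z i) = gm (f i)) {i j : Fin (n+1)} (hij : j ≠ i) :
    P {ω | Z i ω = Z j ω} = 0 := by
  classical
  set μ : Fin (n+1) → Measure ℝ := fun l => P.map (Z l) with hμ
  haveI : ∀ l, IsProbabilityMeasure (μ l) := fun l => by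
    show IsProbabilityMeasure (Measure.map (Z l) P)
    rw [hlaw l]; infer_instance
  obtain ⟨m, hm⟩ := Fin.exists_succAbove_eq hij
  have hA : MeasurableSet {v : Fin (n+1) → ℝ | v i = v j} :=
    measurableSet_eq_fun (measurable_pi_apply i) (measurable_pi_apply j)
  have hpre : {ω | Z i ω = Z j ω} = (fun ω l => Z l ω) ⁻¹' {v | v i = v j} := rfl
  rw [hpre, ← Measure.map_apply (measurable_pi_lambda _ fun l => hZ l) hA,
    map_pi P Z hZ hind]
  have hmp := measurePreserving_piFinSuccAbove μ i
  set e := MeasurableEquiv.piFinSuccAbove (fun _ : Fin (n+1) => ℝ) i with he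
  have hB : MeasurableSet {p : ℝ × (Fin n → ℝ) | p.1 = p.2 m} :=
    measurableSet_eq_fun (by fun_prop) (by fun_prop)
  have hset : {v : Fin (n+1) → ℝ | v i = v j} = e ⁻¹' {p | p.1 = p.2 m} := by
    ext v
    simp [he, MeasurableEquiv.piFinSuccAbove_apply, Fin.insertNthEquiv, Fin.removeNth, hm]
  rw [hset, hmp.measure_preimage hB.nullMeasurableSet, Measure.prod_apply hB]
  have inner : ∀ x : ℝ,
      (Measure.pi fun l => μ (i.succAbove l)) (Prod.mk x ⁻¹' {p | p.1 = p.2 m}) = 0 := by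
    intro x
    have h1 : Prod.mk x ⁻¹' {p : ℝ × (Fin n → ℝ) | p.1 = p.2 m}
        = Set.pi Set.univ (fun l => if l = m then {x} else Set.univ) := by
      ext w
      simp only [Set.mem_preimage, Set.mem_setOf_eq, Set.mem_pi, Set.mem_univ, true_implies]
      constructor
      · intro h l
        by_cases hl : l = m
        · subst hl; simp [← h]
        · simp [hl]
      · intro h
        have := h m
        simp at this
        exact this.symm
    rw [h1, Measure.pi_pi]
    refine Finset.prod_eq_zero (Finset.mem_univ m) ?_
    simp only [if_pos rfl]
    show Measure.map (Z (i.succAbove m)) P {x} = 0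
    rw [hlaw, gm_singleton]
  rw [lintegral_congr inner, lintegral_zero]

end GumbelAux

open GumbelAux in
/-- Gumbel-softmax convergence: with `ε₁, ..., ε_k` i.i.d. standard Gumbel and
`y_T(i) = exp((f_i + ε_i)/T) / Σ_j exp((f_j + ε_j)/T)`, as the temperature `T → 0⁺`
the random vector `y_T` converges in distribution to the one-hot vector `y` with
`P(y(i) = 1) = exp(f_i) / Σ_j exp(f_j)` — stated via convergence of expectations of
bounded continuous test functions. -/
theorem gumbel_softmax_convergence {Ω : Type*} [MeasurableSpace Ω]
    (P : Measure Ω) [IsProbabilityMeasure P]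
    {k : ℕ} (hk : 0 < k)
    (f : Fin k → ℝ)
    (ε : Fin k → Ω → ℝ) (hε_meas : ∀ i, Measurable (ε i))
    (hε_indep : iIndepFun ε P)
    (hε_gumbel : ∀ i x, P {ω | ε i ω ≤ x} = ENNReal.ofReal (Real.exp (-Real.exp (-x))))
    (yT : ℝ → Ω → Fin k → ℝ)
    (hyT : ∀ T ω i, yT T ω i =
      Real.exp ((f i + ε i ω) / T) / ∑ j, Real.exp ((f j + ε j ω) / T))
    (onehot : Fin k → Fin k → ℝ)
    (h1hot : ∀ i j, onehot i j = if j = i then 1 else 0)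
    (softmax : Fin k → ℝ)
    (hsm : ∀ i, softmax i = Real.exp (f i) / ∑ j, Real.exp (f j)) :
    ∀ g : (Fin k → ℝ) → ℝ, Continuous g → (∃ M, ∀ v, |g v| ≤ M) →
      Tendsto (fun T => ∫ ω, g (yT T ω) ∂P) (nhdsWithin 0 (Set.Ioi 0))
        (𝓝 (∑ i, softmax i * g (onehot i))) := by
  intro g hg hgb
  obtain ⟨M, hM⟩ := hgb
  obtain ⟨n, rfl⟩ : ∃ n, k = n + 1 := ⟨k - 1, (Nat.succ_pred_eq_of_pos hk).symm⟩
  set Z : Fin (n+1) → Ω → ℝ := fun i ω => f i + ε i ω with hZdef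
  have hZmeas : ∀ i, Measurable (Z i) := fun i => measurable_const.add (hε_meas i)
  have hZind : iIndepFun Z P :=
    hε_indep.comp (fun i x => f i + x) (fun i => measurable_const.add measurable_id)
  have hlaw : ∀ i, P.map (Z i) = gm (f i) := by
    intro i
    haveI : IsProbabilityMeasure (P.map (Z i)) :=
      Measure.isProbabilityMeasure_map (hZmeas i).aemeasurable
    refine Measure.ext_of_Iic (P.map (Z i)) (gm (f i)) fun x => ?_
    rw [Measure.map_apply (hZmeas i) measurableSet_Iic, gm_Iic]
    have hs : Z i ⁻¹' Set.Iic x = {ω | ε i ω ≤ x - f i} := by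
      ext ω
      simp only [Set.mem_preimage, Set.mem_Iic, Set.mem_setOf_eq, hZdef]
      constructor <;> intro <;> linarith
    rw [hs, hε_gumbel]
  set E : Fin (n+1) → Set Ω := fun i => {ω | ∀ j, j ≠ i → Z j ω < Z i ω} with hEdef
  have hEmeas : ∀ i, MeasurableSet (E i) := by
    intro i
    have h : E i = ⋂ j, ⋂ (_ : j ≠ i), {ω | Z j ω < Z i ω} := by ext ω; simp [hEdef]
    rw [h]
    exact .iInter fun j => .iInter fun _ => measurableSet_lt (hZmeas j) (hZmeas i)
  have hsm_nonneg : ∀ i, 0 ≤ softmax i := by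
    intro i; rw [hsm]; positivity
  have hEP : ∀ i, P (E i) = ENNReal.ofReal (softmax i) := by
    intro i
    rw [hsm]
    exact argmax_prob P f Z hZmeas hZind hlaw i
  have hEuniq : ∀ {ω : Ω} {i i' : Fin (n+1)}, ω ∈ E i → ω ∈ E i' → i = i' := by
    intro ω i i' hi hi'
    by_contra hne
    have h1 := hi i' (Ne.symm hne)
    have h2 := hi' i hne
    exact absurd h1 (not_lt.2 h2.le)
  have hcover : ∀ᵐ ω ∂P, ∃ i, ω ∈ E i := by
    set T : Set Ω := ⋃ (i : Fin (n+1)) (j : Fin (n+1)) (_ : j ≠ i), {ω | Z i ω = Z j ω}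
      with hTdef
    have hT : P T = 0 := by
      refine measure_iUnion_null fun i => measure_iUnion_null fun j =>
        measure_iUnion_null fun hij => ?_
      exact tie_prob P f Z hZmeas hZind hlaw hij
    rw [ae_iff]
    refine measure_mono_null ?_ hT
    intro ω hω
    simp only [Set.mem_setOf_eq] at hω
    push_neg at hω
    obtain ⟨i, -, hmax⟩ := Finset.exists_max_image Finset.univ (fun j => Z j ω)
      Finset.univ_nonempty
    have hni := hω i
    simp only [hEdef, Set.mem_setOf_eq] at hni
    push_neg at hni
    obtain ⟨j, hji, hnl⟩ := hni
    have heq : Z i ω = Z j ω :=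
      le_antisymm hnl (hmax j (Finset.mem_univ j))
    exact Set.mem_iUnion.2 ⟨i, Set.mem_iUnion.2 ⟨j, Set.mem_iUnion.2 ⟨hji, heq⟩⟩⟩
  set L : Ω → ℝ := fun ω => ∑ i, Set.indicator (E i) (fun _ => g (onehot i)) ω with hLdef
  have hLint : ∫ ω, L ω ∂P = ∑ i, softmax i * g (onehot i) := by
    rw [hLdef, integral_finset_sum _
      (fun i _ => (integrable_const (g (onehot i))).indicator (hEmeas i))]
    refine Finset.sum_congr rfl fun i _ => ?_
    rw [integral_indicator_const _ (hEmeas i), measureReal_def, hEP i,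
      ENNReal.toReal_ofReal (hsm_nonneg i), smul_eq_mul]
  have hptw : ∀ᵐ ω ∂P, Tendsto (fun T => g (yT T ω)) (𝓝[>] (0:ℝ)) (𝓝 (L ω)) := by
    filter_upwards [hcover] with ω hω
    obtain ⟨i, hi⟩ := hω
    have hLω : L ω = g (onehot i) := by
      simp only [hLdef]
      rw [Finset.sum_eq_single i]
      · rw [Set.indicator_of_mem hi]
      · intro j _ hji
        exact Set.indicator_of_notMem (fun hj => hji (hEuniq hj hi)) _
      · intro h; exact absurd (Finset.mem_univ i) h
    rw [hLω]
    have hyTlim : Tendsto (fun T => yT T ω) (𝓝[>] (0:ℝ)) (𝓝 (onehot i)) := by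
      rw [tendsto_pi_nhds]
      intro j
      have hD : ∀ l : Fin (n+1), Tendsto (fun T : ℝ => Real.exp ((Z l ω - Z i ω) / T))
          (𝓝[>] (0:ℝ)) (𝓝 (if l = i then 1 else 0)) := by
        intro l
        by_cases hl : l = i
        · subst hl
          simp only [sub_self, zero_div, Real.exp_zero, if_pos rfl]
          exact tendsto_const_nhds
        · rw [if_neg hl]
          have hneg : Z l ω - Z i ω < 0 := sub_neg.2 (hi l hl)
          have h1 : Tendsto (fun T : ℝ => (Z l ω - Z i ω) / T) (𝓝[>] (0:ℝ)) atBot := by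
            simp only [div_eq_mul_inv]
            exact (tendsto_const_mul_atBot_of_neg hneg).2 tendsto_inv_nhdsGT_zero
          exact Real.tendsto_exp_atBot.comp h1
      have hden : Tendsto (fun T : ℝ => ∑ l, Real.exp ((Z l ω - Z i ω) / T))
          (𝓝[>] (0:ℝ)) (𝓝 1) := by
        have h := tendsto_finset_sum Finset.univ (fun l (_ : l ∈ Finset.univ) => hD l)
        have hsum : (∑ l, if l = i then (1:ℝ) else 0) = 1 := by simp
        rwa [hsum] at h
      have hlim := (hD j).div hden one_ne_zero
      have heq : ∀ᶠ T in 𝓝[>] (0:ℝ),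
          Real.exp ((Z j ω - Z i ω) / T) / (∑ l, Real.exp ((Z l ω - Z i ω) / T))
            = yT T ω j := by
        filter_upwards [self_mem_nhdsWithin] with T hT
        rw [hyT]
        have hc : Real.exp (Z i ω / T) ≠ 0 := (Real.exp_pos _).ne'
        simp only [sub_div, Real.exp_sub, ← Finset.sum_div]
        rw [div_div_div_cancel_right₀ hc]
      have hone : (if j = i then (1:ℝ) else 0) / 1 = onehot i j := by
        rw [h1hot]; simp
      rw [hone] at hlim
      exact hlim.congr' heq
    exact (hg.tendsto (onehot i)).comp hyTlim
  have hyTm : ∀ T : ℝ, Measurable (fun ω => yT T ω) := by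
    intro T
    apply measurable_pi_lambda
    intro j
    have h : (fun ω => yT T ω j)
        = fun ω => Real.exp ((f j + ε j ω) / T) / ∑ l, Real.exp ((f l + ε l ω) / T) :=
      funext fun ω => hyT T ω j
    rw [h]
    exact (Real.measurable_exp.comp ((measurable_const.add (hε_meas j)).div_const T)).div
      (Finset.measurable_sum _ fun l _ =>
        Real.measurable_exp.comp ((measurable_const.add (hε_meas l)).div_const T))
  have hfin := MeasureTheory.tendsto_integral_filter_of_dominated_convergence
    (μ := P) (F := fun T ω => g (yT T ω)) (f := L) (bound := fun _ => M)
    (Eventually.of_forall fun T => (hg.measurable.comp (hyTm T)).aestronglyMeasurable)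
    (Eventually.of_forall fun T => ae_of_all _ fun ω => by
      rw [Real.norm_eq_abs]; exact hM _)
    (integrable_const M) hptw
  rw [← hLint]
  exact hfin
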